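/- There exists a finite set A ⊆ ℝ² for which α₀(A) < α₁(A), where α_ℓ(A) is the minimum angle ∠acb over triples of points of A whose circumcircle encloses exactly ℓ points of A. Concretely, for A the three vertices of an equilateral triangle together with its barycenter, α₀(A) = π/6 and α₁(A) = π/3. -/

import Mathlib

open Real EuclideanGeometry
open scoped RealInnerProductSpace

/-- `A` is locally finite: every closed disk contains finitely many points of `A`. -/
def IsLocallyFinite2 (A : Set (EuclideanSpace ℝ (Fin 2))) : Prop :=
  ∀ (x : EuclideanSpace ℝ (Fin 2)) (r : ℝ), {p ∈ A | dist p x ≤ r}.Finite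

/-- `A` is coarsely dense: every closed half-plane contains infinitely many points of `A`. -/
def IsCoarselyDense2 (A : Set (EuclideanSpace ℝ (Fin 2))) : Prop :=
  ∀ (v : EuclideanSpace ℝ (Fin 2)), v ≠ 0 → ∀ t : ℝ, {p ∈ A | t ≤ ⟪v, p⟫}.Infinite

/-- `A` is generic: no four pairwise distinct points of `A` lie on a common circle. -/
def IsGeneric2 (A : Set (EuclideanSpace ℝ (Fin 2))) : Prop :=
  ∀ p₁ p₂ p₃ p₄ : EuclideanSpace ℝ (Fin 2),
    p₁ ∈ A → p₂ ∈ A → p₃ ∈ A → p₄ ∈ A →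
    p₁ ≠ p₂ → p₁ ≠ p₃ → p₁ ≠ p₄ → p₂ ≠ p₃ → p₂ ≠ p₄ → p₃ ≠ p₄ →
    ¬ ∃ (o : EuclideanSpace ℝ (Fin 2)) (r : ℝ),
        dist p₁ o = r ∧ dist p₂ o = r ∧ dist p₃ o = r ∧ dist p₄ o = r

/-- The set of angles `∠ a c b` over pairwise distinct, non-collinear triples of points
of `A` whose circumcircle encloses exactly `ℓ` points of `A` in its open disk. -/
def angleSet (A : Set (EuclideanSpace ℝ (Fin 2))) (ℓ : ℕ) : Set ℝ :=
  {θ | ∃ (a b c o : EuclideanSpace ℝ (Fin 2)) (r : ℝ),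
    a ∈ A ∧ b ∈ A ∧ c ∈ A ∧ a ≠ b ∧ a ≠ c ∧ b ≠ c ∧
    ¬ Collinear ℝ ({a, b, c} : Set (EuclideanSpace ℝ (Fin 2))) ∧
    dist a o = r ∧ dist b o = r ∧ dist c o = r ∧
    {p ∈ A | dist p o < r}.Finite ∧ {p ∈ A | dist p o < r}.ncard = ℓ ∧
    θ = EuclideanGeometry.angle a c b}

/-- `α_ℓ(A)`: the infimum of the angles over triples with exactly `ℓ` enclosed points,
taken to be `π` if there is no such triple. -/
noncomputable def alphaInf (A : Set (EuclideanSpace ℝ (Fin 2))) (ℓ : ℕ) : ℝ :=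
  sInf (insert π (angleSet A ℓ))

/-- `β_ℓ(A)`: the infimum of the supplementary angles over the same triples,
taken to be `π` if there is no such triple. -/
noncomputable def betaInf (A : Set (EuclideanSpace ℝ (Fin 2))) (ℓ : ℕ) : ℝ :=
  sInf (insert π ((fun θ => π - θ) '' angleSet A ℓ))


noncomputable section

private abbrev E := EuclideanSpace ℝ (Fin 2)

private def P (x y : ℝ) : E := (WithLp.equiv 2 (Fin 2 → ℝ)).symm ![x, y]

@[simp] private lemma P_apply0 (x y : ℝ) : P x y 0 = x := rfl
@[simp] private lemma P_apply1 (x y : ℝ) : P x y 1 = y := rfl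
@[simp] private lemma E_sub_apply (u v : E) (i : Fin 2) : (u - v) i = u i - v i := rfl
@[simp] private lemma E_add_apply (u v : E) (i : Fin 2) : (u + v) i = u i + v i := rfl
@[simp] private lemma E_smul_apply (t : ℝ) (u : E) (i : Fin 2) : (t • u) i = t * u i := rfl

private lemma eta (u : E) : u = P (u 0) (u 1) := by
  ext i; fin_cases i <;> rfl

private lemma dist_pt (u v : E) : dist u v = Real.sqrt ((u 0 - v 0)^2 + (u 1 - v 1)^2) := by
  rw [EuclideanSpace.dist_eq, Fin.sum_univ_two]; simp [Real.dist_eq, sq_abs]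

private lemma inner_pt (u v : E) : ⟪u, v⟫ = u 0 * v 0 + u 1 * v 1 := by
  simp [PiLp.inner_apply, Fin.sum_univ_two]; ring

private lemma norm_pt (u : E) : ‖u‖ = Real.sqrt (u 0 ^2 + u 1 ^2) := by
  rw [EuclideanSpace.norm_eq, Fin.sum_univ_two]; simp [sq_abs]

private lemma sqrt_val {a b : ℝ} (hb : 0 ≤ b) (h : a = b^2) : Real.sqrt a = b := by
  rw [h, Real.sqrt_sq hb]

private lemma norm_val {u : E} {c : ℝ} (hc : 0 ≤ c) (h : u 0 ^2 + u 1 ^2 = c^2) : ‖u‖ = c := by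
  rw [norm_pt]; exact sqrt_val hc h

private lemma sq_dist_eq {o : E} {r : ℝ} (p : E) (hp : dist p o = r) :
    (p 0 - o 0)^2 + (p 1 - o 1)^2 = r^2 := by
  rw [← hp, dist_pt, Real.sq_sqrt (by positivity)]

private lemma angle_eq_arccos (p q r : E) :
    EuclideanGeometry.angle p q r = Real.arccos (⟪p - q, r - q⟫ / (‖p - q‖ * ‖r - q‖)) := rfl

local notation "s" => Real.sqrt 3

private lemma ssq : s^2 = 3 := Real.sq_sqrt (by norm_num)
private lemma spos : 0 < s := Real.sqrt_pos.2 (by norm_num)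

private lemma arccos_half : Real.arccos (1/2) = π/3 := by
  rw [← Real.cos_pi_div_three]
  exact Real.arccos_cos (by positivity) (by linarith [Real.pi_pos])

private lemma arccos_neg_half : Real.arccos (-(1/2)) = 2*π/3 := by
  have h : Real.cos (2*π/3) = -(1/2) := by
    rw [show (2*π/3 : ℝ) = π - π/3 by ring, Real.cos_pi_sub, Real.cos_pi_div_three]
  rw [← h]
  exact Real.arccos_cos (by positivity) (by linarith [Real.pi_pos])

private lemma arccos_s32 : Real.arccos (s/2) = π/6 := by
  rw [← Real.cos_pi_div_six]
  exact Real.arccos_cos (by positivity) (by linarith [Real.pi_pos])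

private lemma not_collinear (p q r : E)
    (h : (q 0 - p 0)*(r 1 - p 1) - (q 1 - p 1)*(r 0 - p 0) ≠ 0) :
    ¬ Collinear ℝ ({p, q, r} : Set E) := by
  intro hc
  rw [collinear_iff_of_mem (Set.mem_insert p _)] at hc
  obtain ⟨v, hv⟩ := hc
  obtain ⟨tq, hq⟩ := hv q (by simp)
  obtain ⟨tr, hr⟩ := hv r (by simp)
  apply h
  have hq0 : q 0 - p 0 = tq * v 0 := by rw [hq]; simp
  have hq1 : q 1 - p 1 = tq * v 1 := by rw [hq]; simp
  have hr0 : r 0 - p 0 = tr * v 0 := by rw [hr]; simp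
  have hr1 : r 1 - p 1 = tr * v 1 := by rw [hr]; simp
  rw [hq0, hq1, hr0, hr1]; ring

private def pA : E := P 1 0
private def pB : E := P (-(1/2)) (s/2)
private def pC : E := P (-(1/2)) (-(s/2))
private def pZ : E := P 0 0
private def mAB : E := P (1/2) (s/2)
private def mAC : E := P (1/2) (-(s/2))
private def mBC : E := P (-1) 0

private def A4 : Set E := {pA, pB, pC, pZ}
private lemma d_pA_pB : dist pA pB = s := by
  rw [dist_pt]; apply sqrt_val spos.le
  simp only [pA, pB, P_apply0, P_apply1]; nlinarith [ssq]

private lemma d_pB_pC : dist pB pC = s := by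
  rw [dist_pt]; apply sqrt_val spos.le
  simp only [pB, pC, P_apply0, P_apply1]; nlinarith [ssq]

private lemma d_pC_pA : dist pC pA = s := by
  rw [dist_pt]; apply sqrt_val spos.le
  simp only [pC, pA, P_apply0, P_apply1]; nlinarith [ssq]

private lemma d_pA_pZ : dist pA pZ = 1 := by
  rw [dist_pt]; apply sqrt_val (by norm_num)
  simp only [pA, pZ, P_apply0, P_apply1]; nlinarith [ssq]

private lemma d_pB_pZ : dist pB pZ = 1 := by
  rw [dist_pt]; apply sqrt_val (by norm_num)
  simp only [pB, pZ, P_apply0, P_apply1]; nlinarith [ssq]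

private lemma d_pC_pZ : dist pC pZ = 1 := by
  rw [dist_pt]; apply sqrt_val (by norm_num)
  simp only [pC, pZ, P_apply0, P_apply1]; nlinarith [ssq]

private lemma d_pA_mAB : dist pA mAB = 1 := by
  rw [dist_pt]; apply sqrt_val (by norm_num)
  simp only [pA, mAB, P_apply0, P_apply1]; nlinarith [ssq]

private lemma d_pB_mAB : dist pB mAB = 1 := by
  rw [dist_pt]; apply sqrt_val (by norm_num)
  simp only [pB, mAB, P_apply0, P_apply1]; nlinarith [ssq]

private lemma d_pZ_mAB : dist pZ mAB = 1 := by
  rw [dist_pt]; apply sqrt_val (by norm_num)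
  simp only [pZ, mAB, P_apply0, P_apply1]; nlinarith [ssq]

private lemma d_pC_mAB : dist pC mAB = 2 := by
  rw [dist_pt]; apply sqrt_val (by norm_num)
  simp only [pC, mAB, P_apply0, P_apply1]; nlinarith [ssq]

private lemma d_pA_mAC : dist pA mAC = 1 := by
  rw [dist_pt]; apply sqrt_val (by norm_num)
  simp only [pA, mAC, P_apply0, P_apply1]; nlinarith [ssq]

private lemma d_pC_mAC : dist pC mAC = 1 := by
  rw [dist_pt]; apply sqrt_val (by norm_num)
  simp only [pC, mAC, P_apply0, P_apply1]; nlinarith [ssq]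

private lemma d_pZ_mAC : dist pZ mAC = 1 := by
  rw [dist_pt]; apply sqrt_val (by norm_num)
  simp only [pZ, mAC, P_apply0, P_apply1]; nlinarith [ssq]

private lemma d_pB_mAC : dist pB mAC = 2 := by
  rw [dist_pt]; apply sqrt_val (by norm_num)
  simp only [pB, mAC, P_apply0, P_apply1]; nlinarith [ssq]

private lemma d_pB_mBC : dist pB mBC = 1 := by
  rw [dist_pt]; apply sqrt_val (by norm_num)
  simp only [pB, mBC, P_apply0, P_apply1]; nlinarith [ssq]

private lemma d_pC_mBC : dist pC mBC = 1 := by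
  rw [dist_pt]; apply sqrt_val (by norm_num)
  simp only [pC, mBC, P_apply0, P_apply1]; nlinarith [ssq]

private lemma d_pZ_mBC : dist pZ mBC = 1 := by
  rw [dist_pt]; apply sqrt_val (by norm_num)
  simp only [pZ, mBC, P_apply0, P_apply1]; nlinarith [ssq]

private lemma d_pA_mBC : dist pA mBC = 2 := by
  rw [dist_pt]; apply sqrt_val (by norm_num)
  simp only [pA, mBC, P_apply0, P_apply1]; nlinarith [ssq]

private lemma ang_A_C_B : EuclideanGeometry.angle pA pC pB = π/3 := by
  have h1 : ‖(pA - pC : E)‖ = s := norm_val spos.le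
    (by simp only [E_sub_apply, pA, pC, P_apply0, P_apply1]; nlinarith [ssq])
  have h2 : ‖(pB - pC : E)‖ = s := norm_val spos.le
    (by simp only [E_sub_apply, pB, pC, P_apply0, P_apply1]; nlinarith [ssq])
  rw [angle_eq_arccos, inner_pt, h1, h2,
    show ((pA-pC) 0 * (pB-pC) 0 + (pA-pC) 1 * (pB-pC) 1) = 3/2 by
      simp only [E_sub_apply, pA, pB, pC, P_apply0, P_apply1]; nlinarith [ssq],
    show ((3/2) / (s*s) : ℝ) = 1/2 by
      field_simp; nlinarith [ssq, spos]]
  exact arccos_half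

private lemma ang_A_B_C : EuclideanGeometry.angle pA pB pC = π/3 := by
  have h1 : ‖(pA - pB : E)‖ = s := norm_val spos.le
    (by simp only [E_sub_apply, pA, pB, P_apply0, P_apply1]; nlinarith [ssq])
  have h2 : ‖(pC - pB : E)‖ = s := norm_val spos.le
    (by simp only [E_sub_apply, pC, pB, P_apply0, P_apply1]; nlinarith [ssq])
  rw [angle_eq_arccos, inner_pt, h1, h2,
    show ((pA-pB) 0 * (pC-pB) 0 + (pA-pB) 1 * (pC-pB) 1) = 3/2 by
      simp only [E_sub_apply, pA, pC, pB, P_apply0, P_apply1]; nlinarith [ssq],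
    show ((3/2) / (s*s) : ℝ) = 1/2 by
      field_simp; nlinarith [ssq, spos]]
  exact arccos_half

private lemma ang_B_A_C : EuclideanGeometry.angle pB pA pC = π/3 := by
  have h1 : ‖(pB - pA : E)‖ = s := norm_val spos.le
    (by simp only [E_sub_apply, pB, pA, P_apply0, P_apply1]; nlinarith [ssq])
  have h2 : ‖(pC - pA : E)‖ = s := norm_val spos.le
    (by simp only [E_sub_apply, pC, pA, P_apply0, P_apply1]; nlinarith [ssq])
  rw [angle_eq_arccos, inner_pt, h1, h2,
    show ((pB-pA) 0 * (pC-pA) 0 + (pB-pA) 1 * (pC-pA) 1) = 3/2 by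
      simp only [E_sub_apply, pB, pC, pA, P_apply0, P_apply1]; nlinarith [ssq],
    show ((3/2) / (s*s) : ℝ) = 1/2 by
      field_simp; nlinarith [ssq, spos]]
  exact arccos_half

private lemma ang_A_Z_B : EuclideanGeometry.angle pA pZ pB = 2*π/3 := by
  have h1 : ‖(pA - pZ : E)‖ = 1 := norm_val (by norm_num)
    (by simp only [E_sub_apply, pA, pZ, P_apply0, P_apply1]; nlinarith [ssq])
  have h2 : ‖(pB - pZ : E)‖ = 1 := norm_val (by norm_num)
    (by simp only [E_sub_apply, pB, pZ, P_apply0, P_apply1]; nlinarith [ssq])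
  rw [angle_eq_arccos, inner_pt, h1, h2,
    show ((pA-pZ) 0 * (pB-pZ) 0 + (pA-pZ) 1 * (pB-pZ) 1) = -(1/2) by
      simp only [E_sub_apply, pA, pB, pZ, P_apply0, P_apply1]; nlinarith [ssq],
    show ((-(1/2)) / (1*1) : ℝ) = -(1/2) by norm_num]
  exact arccos_neg_half

private lemma ang_Z_A_B : EuclideanGeometry.angle pZ pA pB = π/6 := by
  have h1 : ‖(pZ - pA : E)‖ = 1 := norm_val (by norm_num)
    (by simp only [E_sub_apply, pZ, pA, P_apply0, P_apply1]; nlinarith [ssq])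
  have h2 : ‖(pB - pA : E)‖ = s := norm_val spos.le
    (by simp only [E_sub_apply, pB, pA, P_apply0, P_apply1]; nlinarith [ssq])
  rw [angle_eq_arccos, inner_pt, h1, h2,
    show ((pZ-pA) 0 * (pB-pA) 0 + (pZ-pA) 1 * (pB-pA) 1) = 3/2 by
      simp only [E_sub_apply, pZ, pB, pA, P_apply0, P_apply1]; nlinarith [ssq],
    show ((3/2) / (1*s) : ℝ) = s/2 by
      field_simp; nlinarith [ssq, spos]]
  exact arccos_s32

private lemma ang_Z_B_A : EuclideanGeometry.angle pZ pB pA = π/6 := by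
  have h1 : ‖(pZ - pB : E)‖ = 1 := norm_val (by norm_num)
    (by simp only [E_sub_apply, pZ, pB, P_apply0, P_apply1]; nlinarith [ssq])
  have h2 : ‖(pA - pB : E)‖ = s := norm_val spos.le
    (by simp only [E_sub_apply, pA, pB, P_apply0, P_apply1]; nlinarith [ssq])
  rw [angle_eq_arccos, inner_pt, h1, h2,
    show ((pZ-pB) 0 * (pA-pB) 0 + (pZ-pB) 1 * (pA-pB) 1) = 3/2 by
      simp only [E_sub_apply, pZ, pA, pB, P_apply0, P_apply1]; nlinarith [ssq],
    show ((3/2) / (1*s) : ℝ) = s/2 by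
      field_simp; nlinarith [ssq, spos]]
  exact arccos_s32

private lemma ang_A_Z_C : EuclideanGeometry.angle pA pZ pC = 2*π/3 := by
  have h1 : ‖(pA - pZ : E)‖ = 1 := norm_val (by norm_num)
    (by simp only [E_sub_apply, pA, pZ, P_apply0, P_apply1]; nlinarith [ssq])
  have h2 : ‖(pC - pZ : E)‖ = 1 := norm_val (by norm_num)
    (by simp only [E_sub_apply, pC, pZ, P_apply0, P_apply1]; nlinarith [ssq])
  rw [angle_eq_arccos, inner_pt, h1, h2,
    show ((pA-pZ) 0 * (pC-pZ) 0 + (pA-pZ) 1 * (pC-pZ) 1) = -(1/2) by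
      simp only [E_sub_apply, pA, pC, pZ, P_apply0, P_apply1]; nlinarith [ssq],
    show ((-(1/2)) / (1*1) : ℝ) = -(1/2) by norm_num]
  exact arccos_neg_half

private lemma ang_Z_A_C : EuclideanGeometry.angle pZ pA pC = π/6 := by
  have h1 : ‖(pZ - pA : E)‖ = 1 := norm_val (by norm_num)
    (by simp only [E_sub_apply, pZ, pA, P_apply0, P_apply1]; nlinarith [ssq])
  have h2 : ‖(pC - pA : E)‖ = s := norm_val spos.le
    (by simp only [E_sub_apply, pC, pA, P_apply0, P_apply1]; nlinarith [ssq])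
  rw [angle_eq_arccos, inner_pt, h1, h2,
    show ((pZ-pA) 0 * (pC-pA) 0 + (pZ-pA) 1 * (pC-pA) 1) = 3/2 by
      simp only [E_sub_apply, pZ, pC, pA, P_apply0, P_apply1]; nlinarith [ssq],
    show ((3/2) / (1*s) : ℝ) = s/2 by
      field_simp; nlinarith [ssq, spos]]
  exact arccos_s32

private lemma ang_Z_C_A : EuclideanGeometry.angle pZ pC pA = π/6 := by
  have h1 : ‖(pZ - pC : E)‖ = 1 := norm_val (by norm_num)
    (by simp only [E_sub_apply, pZ, pC, P_apply0, P_apply1]; nlinarith [ssq])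
  have h2 : ‖(pA - pC : E)‖ = s := norm_val spos.le
    (by simp only [E_sub_apply, pA, pC, P_apply0, P_apply1]; nlinarith [ssq])
  rw [angle_eq_arccos, inner_pt, h1, h2,
    show ((pZ-pC) 0 * (pA-pC) 0 + (pZ-pC) 1 * (pA-pC) 1) = 3/2 by
      simp only [E_sub_apply, pZ, pA, pC, P_apply0, P_apply1]; nlinarith [ssq],
    show ((3/2) / (1*s) : ℝ) = s/2 by
      field_simp; nlinarith [ssq, spos]]
  exact arccos_s32

private lemma ang_B_Z_C : EuclideanGeometry.angle pB pZ pC = 2*π/3 := by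
  have h1 : ‖(pB - pZ : E)‖ = 1 := norm_val (by norm_num)
    (by simp only [E_sub_apply, pB, pZ, P_apply0, P_apply1]; nlinarith [ssq])
  have h2 : ‖(pC - pZ : E)‖ = 1 := norm_val (by norm_num)
    (by simp only [E_sub_apply, pC, pZ, P_apply0, P_apply1]; nlinarith [ssq])
  rw [angle_eq_arccos, inner_pt, h1, h2,
    show ((pB-pZ) 0 * (pC-pZ) 0 + (pB-pZ) 1 * (pC-pZ) 1) = -(1/2) by
      simp only [E_sub_apply, pB, pC, pZ, P_apply0, P_apply1]; nlinarith [ssq],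
    show ((-(1/2)) / (1*1) : ℝ) = -(1/2) by norm_num]
  exact arccos_neg_half

private lemma ang_Z_B_C : EuclideanGeometry.angle pZ pB pC = π/6 := by
  have h1 : ‖(pZ - pB : E)‖ = 1 := norm_val (by norm_num)
    (by simp only [E_sub_apply, pZ, pB, P_apply0, P_apply1]; nlinarith [ssq])
  have h2 : ‖(pC - pB : E)‖ = s := norm_val spos.le
    (by simp only [E_sub_apply, pC, pB, P_apply0, P_apply1]; nlinarith [ssq])
  rw [angle_eq_arccos, inner_pt, h1, h2,
    show ((pZ-pB) 0 * (pC-pB) 0 + (pZ-pB) 1 * (pC-pB) 1) = 3/2 by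
      simp only [E_sub_apply, pZ, pC, pB, P_apply0, P_apply1]; nlinarith [ssq],
    show ((3/2) / (1*s) : ℝ) = s/2 by
      field_simp; nlinarith [ssq, spos]]
  exact arccos_s32

private lemma ang_Z_C_B : EuclideanGeometry.angle pZ pC pB = π/6 := by
  have h1 : ‖(pZ - pC : E)‖ = 1 := norm_val (by norm_num)
    (by simp only [E_sub_apply, pZ, pC, P_apply0, P_apply1]; nlinarith [ssq])
  have h2 : ‖(pB - pC : E)‖ = s := norm_val spos.le
    (by simp only [E_sub_apply, pB, pC, P_apply0, P_apply1]; nlinarith [ssq])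
  rw [angle_eq_arccos, inner_pt, h1, h2,
    show ((pZ-pC) 0 * (pB-pC) 0 + (pZ-pC) 1 * (pB-pC) 1) = 3/2 by
      simp only [E_sub_apply, pZ, pB, pC, P_apply0, P_apply1]; nlinarith [ssq],
    show ((3/2) / (1*s) : ℝ) = s/2 by
      field_simp; nlinarith [ssq, spos]]
  exact arccos_s32

private lemma ang_B_C_A : EuclideanGeometry.angle pB pC pA = π/3 := by
  rw [EuclideanGeometry.angle_comm]; exact ang_A_C_B

private lemma ang_C_B_A : EuclideanGeometry.angle pC pB pA = π/3 := by
  rw [EuclideanGeometry.angle_comm]; exact ang_A_B_C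

private lemma ang_C_A_B : EuclideanGeometry.angle pC pA pB = π/3 := by
  rw [EuclideanGeometry.angle_comm]; exact ang_B_A_C

private lemma ang_B_Z_A : EuclideanGeometry.angle pB pZ pA = 2*π/3 := by
  rw [EuclideanGeometry.angle_comm]; exact ang_A_Z_B

private lemma ang_B_A_Z : EuclideanGeometry.angle pB pA pZ = π/6 := by
  rw [EuclideanGeometry.angle_comm]; exact ang_Z_A_B

private lemma ang_A_B_Z : EuclideanGeometry.angle pA pB pZ = π/6 := by
  rw [EuclideanGeometry.angle_comm]; exact ang_Z_B_A

private lemma ang_C_Z_A : EuclideanGeometry.angle pC pZ pA = 2*π/3 := by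
  rw [EuclideanGeometry.angle_comm]; exact ang_A_Z_C

private lemma ang_C_A_Z : EuclideanGeometry.angle pC pA pZ = π/6 := by
  rw [EuclideanGeometry.angle_comm]; exact ang_Z_A_C

private lemma ang_A_C_Z : EuclideanGeometry.angle pA pC pZ = π/6 := by
  rw [EuclideanGeometry.angle_comm]; exact ang_Z_C_A

private lemma ang_C_Z_B : EuclideanGeometry.angle pC pZ pB = 2*π/3 := by
  rw [EuclideanGeometry.angle_comm]; exact ang_B_Z_C

private lemma ang_C_B_Z : EuclideanGeometry.angle pC pB pZ = π/6 := by
  rw [EuclideanGeometry.angle_comm]; exact ang_Z_B_C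

private lemma ang_B_C_Z : EuclideanGeometry.angle pB pC pZ = π/6 := by
  rw [EuclideanGeometry.angle_comm]; exact ang_Z_C_B

private lemma solveABC {o : E} {r : ℝ} (h1 : dist pA o = r) (h2 : dist pB o = r)
    (h3 : dist pC o = r) : o = pZ ∧ r = 1 := by
  have hr0 : 0 ≤ r := h3 ▸ dist_nonneg
  have eA := sq_dist_eq pA h1
  have eB := sq_dist_eq pB h2
  have eC := sq_dist_eq pC h3
  simp only [pA, pB, pC, P_apply0, P_apply1] at eA eB eC
  have hy' : s * o 1 = 0 := by nlinarith [eB, eC]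
  have hy : o 1 = 0 := (mul_eq_zero.mp hy').resolve_left spos.ne'
  have hx : o 0 = 0 := by nlinarith [eA, eB, ssq, hy]
  have hr : r = 1 := by nlinarith [eA, hx, hy, hr0]
  exact ⟨by rw [eta o, hx, hy]; rfl, hr⟩

private lemma solveABZ {o : E} {r : ℝ} (h1 : dist pA o = r) (h2 : dist pB o = r)
    (h3 : dist pZ o = r) : o = mAB ∧ r = 1 := by
  have hr0 : 0 ≤ r := h3 ▸ dist_nonneg
  have eA := sq_dist_eq pA h1
  have eB := sq_dist_eq pB h2
  have eZ := sq_dist_eq pZ h3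
  simp only [pA, pB, pZ, P_apply0, P_apply1] at eA eB eZ
  have hx : o 0 = 1/2 := by nlinarith [eA, eZ]
  have hy' : s * (o 1 - s/2) = 0 := by nlinarith [eB, eZ, ssq, hx]
  have hy : o 1 = s/2 := by
    have := (mul_eq_zero.mp hy').resolve_left spos.ne'
    linarith
  have hr : r = 1 := by nlinarith [eZ, hx, hy, ssq, hr0]
  exact ⟨by rw [eta o, hx, hy]; rfl, hr⟩

private lemma solveACZ {o : E} {r : ℝ} (h1 : dist pA o = r) (h2 : dist pC o = r)
    (h3 : dist pZ o = r) : o = mAC ∧ r = 1 := by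
  have hr0 : 0 ≤ r := h3 ▸ dist_nonneg
  have eA := sq_dist_eq pA h1
  have eC := sq_dist_eq pC h2
  have eZ := sq_dist_eq pZ h3
  simp only [pA, pC, pZ, P_apply0, P_apply1] at eA eC eZ
  have hx : o 0 = 1/2 := by nlinarith [eA, eZ]
  have hy' : s * (o 1 + s/2) = 0 := by nlinarith [eC, eZ, ssq, hx]
  have hy : o 1 = -(s/2) := by
    have := (mul_eq_zero.mp hy').resolve_left spos.ne'
    linarith
  have hr : r = 1 := by nlinarith [eZ, hx, hy, ssq, hr0]
  exact ⟨by rw [eta o, hx, hy]; rfl, hr⟩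

private lemma solveBCZ {o : E} {r : ℝ} (h1 : dist pB o = r) (h2 : dist pC o = r)
    (h3 : dist pZ o = r) : o = mBC ∧ r = 1 := by
  have hr0 : 0 ≤ r := h3 ▸ dist_nonneg
  have eB := sq_dist_eq pB h1
  have eC := sq_dist_eq pC h2
  have eZ := sq_dist_eq pZ h3
  simp only [pB, pC, pZ, P_apply0, P_apply1] at eB eC eZ
  have hy' : s * o 1 = 0 := by nlinarith [eB, eC]
  have hy : o 1 = 0 := (mul_eq_zero.mp hy').resolve_left spos.ne'
  have hx : o 0 = -1 := by nlinarith [eB, eZ, ssq, hy]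
  have hr : r = 1 := by nlinarith [eZ, hx, hy, hr0]
  exact ⟨by rw [eta o, hx, hy]; rfl, hr⟩

private lemma countZ : {p ∈ A4 | dist p pZ < 1} = {pZ} := by
  ext p
  simp only [A4, Set.mem_insert_iff, Set.mem_singleton_iff, Set.mem_setOf_eq]
  constructor
  · rintro ⟨(rfl | rfl | rfl | rfl), hlt⟩
    · rw [d_pA_pZ] at hlt; norm_num at hlt
    · rw [d_pB_pZ] at hlt; norm_num at hlt
    · rw [d_pC_pZ] at hlt; norm_num at hlt
    · rfl
  · rintro rfl
    exact ⟨Or.inr (Or.inr (Or.inr rfl)), by rw [dist_self]; norm_num⟩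

private lemma countAB : {p ∈ A4 | dist p mAB < 1} = ∅ := by
  ext p
  simp only [A4, Set.mem_insert_iff, Set.mem_singleton_iff, Set.mem_setOf_eq,
    Set.mem_empty_iff_false, iff_false, not_and]
  rintro (rfl | rfl | rfl | rfl)
  · rw [d_pA_mAB]; norm_num
  · rw [d_pB_mAB]; norm_num
  · rw [d_pC_mAB]; norm_num
  · rw [d_pZ_mAB]; norm_num

private lemma countAC : {p ∈ A4 | dist p mAC < 1} = ∅ := by
  ext p
  simp only [A4, Set.mem_insert_iff, Set.mem_singleton_iff, Set.mem_setOf_eq,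
    Set.mem_empty_iff_false, iff_false, not_and]
  rintro (rfl | rfl | rfl | rfl)
  · rw [d_pA_mAC]; norm_num
  · rw [d_pB_mAC]; norm_num
  · rw [d_pC_mAC]; norm_num
  · rw [d_pZ_mAC]; norm_num

private lemma countBC : {p ∈ A4 | dist p mBC < 1} = ∅ := by
  ext p
  simp only [A4, Set.mem_insert_iff, Set.mem_singleton_iff, Set.mem_setOf_eq,
    Set.mem_empty_iff_false, iff_false, not_and]
  rintro (rfl | rfl | rfl | rfl)
  · rw [d_pA_mBC]; norm_num
  · rw [d_pB_mBC]; norm_num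
  · rw [d_pC_mBC]; norm_num
  · rw [d_pZ_mBC]; norm_num

private lemma bary : (3:ℝ)⁻¹ • (pA + pB + pC) = pZ := by
  ext i; fin_cases i <;> simp [pA, pB, pC, pZ] <;> norm_num

private lemma noncolZBA : ¬ Collinear ℝ ({pZ, pB, pA} : Set E) := by
  apply not_collinear
  simp only [pZ, pB, pA, P_apply0, P_apply1]
  intro h; nlinarith [spos]

private lemma noncolABC : ¬ Collinear ℝ ({pA, pB, pC} : Set E) := by
  apply not_collinear
  simp only [pZ, pB, pA, pC, P_apply0, P_apply1]
  intro h; nlinarith [spos]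

attribute [irreducible] P pA pB pC pZ mAB mAC mBC

private lemma classify {ℓ : ℕ} {θ : ℝ} (h : θ ∈ angleSet A4 ℓ) :
    (ℓ = 0 ∧ (θ = π/6 ∨ θ = 2*π/3)) ∨ (ℓ = 1 ∧ θ = π/3) := by
  obtain ⟨a, b, c, o, r, ha, hb, hc, hab, hac, hbc, hcol, hd1, hd2, hd3, hfin, hcard, hθ⟩ := h
  simp only [A4, Set.mem_insert_iff, Set.mem_singleton_iff] at ha hb hc
  rcases ha with rfl | rfl | rfl | rfl
  · rcases hb with rfl | rfl | rfl | rfl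
    · rcases hc with rfl | rfl | rfl | rfl
      · exact absurd rfl hab
      · exact absurd rfl hab
      · exact absurd rfl hab
      · exact absurd rfl hab
    · rcases hc with rfl | rfl | rfl | rfl
      · exact absurd rfl hac
      · exact absurd rfl hbc
      · obtain ⟨rfl, rfl⟩ := solveABC hd1 hd2 hd3
        rw [countZ] at hcard
        simp only [Set.ncard_singleton] at hcard
        exact Or.inr ⟨hcard.symm, hθ.trans ang_A_C_B⟩
      · obtain ⟨rfl, rfl⟩ := solveABZ hd1 hd2 hd3
        rw [countAB] at hcard
        simp only [Set.ncard_empty] at hcard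
        exact Or.inl ⟨hcard.symm, Or.inr (hθ.trans ang_A_Z_B)⟩
    · rcases hc with rfl | rfl | rfl | rfl
      · exact absurd rfl hac
      · obtain ⟨rfl, rfl⟩ := solveABC hd1 hd3 hd2
        rw [countZ] at hcard
        simp only [Set.ncard_singleton] at hcard
        exact Or.inr ⟨hcard.symm, hθ.trans ang_A_B_C⟩
      · exact absurd rfl hbc
      · obtain ⟨rfl, rfl⟩ := solveACZ hd1 hd2 hd3
        rw [countAC] at hcard
        simp only [Set.ncard_empty] at hcard
        exact Or.inl ⟨hcard.symm, Or.inr (hθ.trans ang_A_Z_C)⟩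
    · rcases hc with rfl | rfl | rfl | rfl
      · exact absurd rfl hac
      · obtain ⟨rfl, rfl⟩ := solveABZ hd1 hd3 hd2
        rw [countAB] at hcard
        simp only [Set.ncard_empty] at hcard
        exact Or.inl ⟨hcard.symm, Or.inl (hθ.trans ang_A_B_Z)⟩
      · obtain ⟨rfl, rfl⟩ := solveACZ hd1 hd3 hd2
        rw [countAC] at hcard
        simp only [Set.ncard_empty] at hcard
        exact Or.inl ⟨hcard.symm, Or.inl (hθ.trans ang_A_C_Z)⟩
      · exact absurd rfl hbc
  · rcases hb with rfl | rfl | rfl | rfl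
    · rcases hc with rfl | rfl | rfl | rfl
      · exact absurd rfl hbc
      · exact absurd rfl hac
      · obtain ⟨rfl, rfl⟩ := solveABC hd2 hd1 hd3
        rw [countZ] at hcard
        simp only [Set.ncard_singleton] at hcard
        exact Or.inr ⟨hcard.symm, hθ.trans ang_B_C_A⟩
      · obtain ⟨rfl, rfl⟩ := solveABZ hd2 hd1 hd3
        rw [countAB] at hcard
        simp only [Set.ncard_empty] at hcard
        exact Or.inl ⟨hcard.symm, Or.inr (hθ.trans ang_B_Z_A)⟩
    · rcases hc with rfl | rfl | rfl | rfl
      · exact absurd rfl hab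
      · exact absurd rfl hab
      · exact absurd rfl hab
      · exact absurd rfl hab
    · rcases hc with rfl | rfl | rfl | rfl
      · obtain ⟨rfl, rfl⟩ := solveABC hd3 hd1 hd2
        rw [countZ] at hcard
        simp only [Set.ncard_singleton] at hcard
        exact Or.inr ⟨hcard.symm, hθ.trans ang_B_A_C⟩
      · exact absurd rfl hac
      · exact absurd rfl hbc
      · obtain ⟨rfl, rfl⟩ := solveBCZ hd1 hd2 hd3
        rw [countBC] at hcard
        simp only [Set.ncard_empty] at hcard
        exact Or.inl ⟨hcard.symm, Or.inr (hθ.trans ang_B_Z_C)⟩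
    · rcases hc with rfl | rfl | rfl | rfl
      · obtain ⟨rfl, rfl⟩ := solveABZ hd3 hd1 hd2
        rw [countAB] at hcard
        simp only [Set.ncard_empty] at hcard
        exact Or.inl ⟨hcard.symm, Or.inl (hθ.trans ang_B_A_Z)⟩
      · exact absurd rfl hac
      · obtain ⟨rfl, rfl⟩ := solveBCZ hd1 hd3 hd2
        rw [countBC] at hcard
        simp only [Set.ncard_empty] at hcard
        exact Or.inl ⟨hcard.symm, Or.inl (hθ.trans ang_B_C_Z)⟩
      · exact absurd rfl hbc
  · rcases hb with rfl | rfl | rfl | rfl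
    · rcases hc with rfl | rfl | rfl | rfl
      · exact absurd rfl hbc
      · obtain ⟨rfl, rfl⟩ := solveABC hd2 hd3 hd1
        rw [countZ] at hcard
        simp only [Set.ncard_singleton] at hcard
        exact Or.inr ⟨hcard.symm, hθ.trans ang_C_B_A⟩
      · exact absurd rfl hac
      · obtain ⟨rfl, rfl⟩ := solveACZ hd2 hd1 hd3
        rw [countAC] at hcard
        simp only [Set.ncard_empty] at hcard
        exact Or.inl ⟨hcard.symm, Or.inr (hθ.trans ang_C_Z_A)⟩
    · rcases hc with rfl | rfl | rfl | rfl
      · obtain ⟨rfl, rfl⟩ := solveABC hd3 hd2 hd1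
        rw [countZ] at hcard
        simp only [Set.ncard_singleton] at hcard
        exact Or.inr ⟨hcard.symm, hθ.trans ang_C_A_B⟩
      · exact absurd rfl hbc
      · exact absurd rfl hac
      · obtain ⟨rfl, rfl⟩ := solveBCZ hd2 hd1 hd3
        rw [countBC] at hcard
        simp only [Set.ncard_empty] at hcard
        exact Or.inl ⟨hcard.symm, Or.inr (hθ.trans ang_C_Z_B)⟩
    · rcases hc with rfl | rfl | rfl | rfl
      · exact absurd rfl hab
      · exact absurd rfl hab
      · exact absurd rfl hab
      · exact absurd rfl hab
    · rcases hc with rfl | rfl | rfl | rfl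
      · obtain ⟨rfl, rfl⟩ := solveACZ hd3 hd1 hd2
        rw [countAC] at hcard
        simp only [Set.ncard_empty] at hcard
        exact Or.inl ⟨hcard.symm, Or.inl (hθ.trans ang_C_A_Z)⟩
      · obtain ⟨rfl, rfl⟩ := solveBCZ hd3 hd1 hd2
        rw [countBC] at hcard
        simp only [Set.ncard_empty] at hcard
        exact Or.inl ⟨hcard.symm, Or.inl (hθ.trans ang_C_B_Z)⟩
      · exact absurd rfl hac
      · exact absurd rfl hbc
  · rcases hb with rfl | rfl | rfl | rfl
    · rcases hc with rfl | rfl | rfl | rfl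
      · exact absurd rfl hbc
      · obtain ⟨rfl, rfl⟩ := solveABZ hd2 hd3 hd1
        rw [countAB] at hcard
        simp only [Set.ncard_empty] at hcard
        exact Or.inl ⟨hcard.symm, Or.inl (hθ.trans ang_Z_B_A)⟩
      · obtain ⟨rfl, rfl⟩ := solveACZ hd2 hd3 hd1
        rw [countAC] at hcard
        simp only [Set.ncard_empty] at hcard
        exact Or.inl ⟨hcard.symm, Or.inl (hθ.trans ang_Z_C_A)⟩
      · exact absurd rfl hac
    · rcases hc with rfl | rfl | rfl | rfl
      · obtain ⟨rfl, rfl⟩ := solveABZ hd3 hd2 hd1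
        rw [countAB] at hcard
        simp only [Set.ncard_empty] at hcard
        exact Or.inl ⟨hcard.symm, Or.inl (hθ.trans ang_Z_A_B)⟩
      · exact absurd rfl hbc
      · obtain ⟨rfl, rfl⟩ := solveBCZ hd2 hd3 hd1
        rw [countBC] at hcard
        simp only [Set.ncard_empty] at hcard
        exact Or.inl ⟨hcard.symm, Or.inl (hθ.trans ang_Z_C_B)⟩
      · exact absurd rfl hac
    · rcases hc with rfl | rfl | rfl | rfl
      · obtain ⟨rfl, rfl⟩ := solveACZ hd3 hd2 hd1
        rw [countAC] at hcard
        simp only [Set.ncard_empty] at hcard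
        exact Or.inl ⟨hcard.symm, Or.inl (hθ.trans ang_Z_A_C)⟩
      · obtain ⟨rfl, rfl⟩ := solveBCZ hd3 hd2 hd1
        rw [countBC] at hcard
        simp only [Set.ncard_empty] at hcard
        exact Or.inl ⟨hcard.symm, Or.inl (hθ.trans ang_Z_B_C)⟩
      · exact absurd rfl hbc
      · exact absurd rfl hac
    · rcases hc with rfl | rfl | rfl | rfl
      · exact absurd rfl hab
      · exact absurd rfl hab
      · exact absurd rfl hab
      · exact absurd rfl hab

private lemma ne_of_dist {p q : E} {v : ℝ} (h : dist p q = v) (hv : v ≠ 0) : p ≠ q :=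
  fun he => hv (by rw [← h, he, dist_self])

private lemma neAB : pA ≠ pB := ne_of_dist d_pA_pB spos.ne'
private lemma neAC : pA ≠ pC := (ne_of_dist d_pC_pA spos.ne').symm
private lemma neBC : pB ≠ pC := ne_of_dist d_pB_pC spos.ne'
private lemma neZB : pZ ≠ pB := (ne_of_dist d_pB_pZ one_ne_zero).symm
private lemma neZA : pZ ≠ pA := (ne_of_dist d_pA_pZ one_ne_zero).symm

private lemma A4fin : A4.Finite := by
  show Set.Finite {pA, pB, pC, pZ}
  exact (((Set.finite_singleton pZ).insert pC).insert pB).insert pA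

private lemma memA : pA ∈ A4 := Set.mem_insert _ _
private lemma memB : pB ∈ A4 := Or.inr (Set.mem_insert _ _)
private lemma memC : pC ∈ A4 := Or.inr (Or.inr (Set.mem_insert _ _))
private lemma memZ : pZ ∈ A4 := Or.inr (Or.inr (Or.inr rfl))

private lemma mem0 : π/6 ∈ angleSet A4 0 :=
  ⟨pZ, pB, pA, mAB, 1, memZ, memB, memA, neZB, neZA, neAB.symm, noncolZBA,
    d_pZ_mAB, d_pB_mAB, d_pA_mAB,
    A4fin.subset fun p hp => hp.1,
    by rw [countAB]; simp,
    ang_Z_A_B.symm⟩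

private lemma mem1 : π/3 ∈ angleSet A4 1 :=
  ⟨pA, pB, pC, pZ, 1, memA, memB, memC, neAB, neAC, neBC, noncolABC,
    d_pA_pZ, d_pB_pZ, d_pC_pZ,
    A4fin.subset fun p hp => hp.1,
    by rw [countZ]; simp,
    ang_A_C_B.symm⟩

private lemma alpha0 : alphaInf A4 0 = π/6 := by
  have lb : ∀ x ∈ insert π (angleSet A4 0), π/6 ≤ x := by
    rintro x (rfl | hx)
    · linarith [Real.pi_pos]
    · rcases classify hx with ⟨-, rfl | rfl⟩ | ⟨h, -⟩
      · exact le_refl _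
      · linarith [Real.pi_pos]
      · exact absurd h (by norm_num)
  exact le_antisymm (csInf_le ⟨π/6, fun x hx => lb x hx⟩ (Set.mem_insert_iff.2 (Or.inr mem0)))
    (le_csInf ⟨π, Set.mem_insert _ _⟩ lb)

private lemma alpha1 : alphaInf A4 1 = π/3 := by
  have lb : ∀ x ∈ insert π (angleSet A4 1), π/3 ≤ x := by
    rintro x (rfl | hx)
    · linarith [Real.pi_pos]
    · rcases classify hx with ⟨h, -⟩ | ⟨-, rfl⟩
      · exact absurd h (by norm_num)
      · exact le_refl _
  exact le_antisymm (csInf_le ⟨π/3, fun x hx => lb x hx⟩ (Set.mem_insert_iff.2 (Or.inr mem1)))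
    (le_csInf ⟨π, Set.mem_insert _ _⟩ lb)

end

/-- There is a finite set `A ⊆ ℝ²` (the vertices of an equilateral triangle together
with its barycenter) with `α₀(A) = π/6 < π/3 = α₁(A)`. -/
theorem exists_finite_alpha_zero_lt_alpha_one :
    ∃ A : Set (EuclideanSpace ℝ (Fin 2)),
      A.Finite ∧
      (∃ a b c : EuclideanSpace ℝ (Fin 2),
        dist a b = dist b c ∧ dist b c = dist c a ∧ a ≠ b ∧
        A = {a, b, c, (3 : ℝ)⁻¹ • (a + b + c)}) ∧
      alphaInf A 0 = π / 6 ∧ alphaInf A 1 = π / 3 ∧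
      alphaInf A 0 < alphaInf A 1 := by
  refine ⟨A4, A4fin, ⟨pA, pB, pC, ?_, ?_, neAB, ?_⟩, alpha0, alpha1, ?_⟩
  · rw [d_pA_pB, d_pB_pC]
  · rw [d_pB_pC, d_pC_pA]
  · rw [bary]; rfl
  · rw [alpha0, alpha1]; linarith [Real.pi_pos]
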